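/- Let M ⊆ Aut L be a group (L/K finite Galois with group G, M separating and G-conjugation closed), m ∈ Specm Γ with lifting ℓ_m to the integral closure of Γ in L, and suppose the stabilizer M_m of ℓ_m in M is finite. Then for any n ∈ Specm Γ, the set S(m,n) = {φ ∈ M | ℓ_n ∈ GφG·ℓ_m} satisfies |S(m,n)| ≤ |G|² |M_m| / (|G_m| |G_n|), where G_m, G_n are the stabilizers of ℓ_m, ℓ_n in G. -/
import Mathlib


/-- The set `S(m,n) = {φ ∈ M | ℓ_n ∈ G φ G · ℓ_m}`, for subgroups `G, M` of an ambient
group `Ω` acting on the space `X` of maximal ideals of the integral closure. -/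
def galoisConnectingSet {Ω X : Type*} [Group Ω] [MulAction Ω X]
    (G M : Subgroup Ω) (lm ln : X) : Set Ω :=
  {φ | φ ∈ M ∧ ∃ g₁ ∈ G, ∃ g₂ ∈ G, g₂ • ln = (φ * g₁) • lm}

open Classical in
/-- A choice of a reference element `φ₀ ∈ M` with `h₂ • ln = (φ₀ * h₁) • lm`, if one exists. -/
noncomputable def gcsRef {Ω X : Type*} [Group Ω] [MulAction Ω X]
    (M : Subgroup Ω) (lm ln : X) (h₁ h₂ : Ω) : Ω :=
  if h : ∃ φ, φ ∈ M ∧ h₂ • ln = (φ * h₁) • lm then h.choose else 1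

theorem gcsRef_spec {Ω X : Type*} [Group Ω] [MulAction Ω X]
    (M : Subgroup Ω) (lm ln : X) {h₁ h₂ : Ω}
    (h : ∃ φ, φ ∈ M ∧ h₂ • ln = (φ * h₁) • lm) :
    gcsRef M lm ln h₁ h₂ ∈ M ∧ h₂ • ln = (gcsRef M lm ln h₁ h₂ * h₁) • lm := by
  rw [gcsRef, dif_pos h]; exact h.choose_spec

/-- Let `G` (finite, playing the role of the Galois group) and `M`
(a group, closed under `G`-conjugation) be subgroups of a group `Ω` acting on the set `X`
of maximal ideals of the integral closure of `Γ` in `L`, let `ℓ_m, ℓ_n ∈ X` be liftings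
of `m, n`, and suppose the stabilizer `M_m` of `ℓ_m` in `M` is finite.  Then
`|S(m,n)| ≤ |G|² |M_m| / (|G_m| |G_n|)`, i.e.
`|S(m,n)| · |G_m| · |G_n| ≤ |G|² · |M_m|`. -/
theorem card_connecting_set_le
    {Ω X : Type*} [Group Ω] [MulAction Ω X] (G M : Subgroup Ω)
    (hG : Finite G)
    (hconj : ∀ g ∈ G, ∀ φ ∈ M, g⁻¹ * φ * g ∈ M)
    (lm ln : X)
    (hMm : Finite ↥(M ⊓ MulAction.stabilizer Ω lm)) :
    Nat.card (galoisConnectingSet G M lm ln) *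
        Nat.card ↥(G ⊓ MulAction.stabilizer Ω lm) *
        Nat.card ↥(G ⊓ MulAction.stabilizer Ω ln) ≤
      Nat.card G ^ 2 * Nat.card ↥(M ⊓ MulAction.stabilizer Ω lm) := by
  classical
  -- choose witnesses for each element of S
  have hwit : ∀ s : galoisConnectingSet G M lm ln,
      ∃ g₁, g₁ ∈ G ∧ ∃ g₂, g₂ ∈ G ∧ g₂ • ln = ((s : Ω) * g₁) • lm := fun s => s.2.2
  choose w₁ hw₁ w₂ hw₂ hweq using hwit
  -- the key compatibility equation for perturbed witnesses
  have key : ∀ (s : galoisConnectingSet G M lm ln)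
      (a : ↥(G ⊓ MulAction.stabilizer Ω lm)) (b : ↥(G ⊓ MulAction.stabilizer Ω ln)),
      (w₂ s * (b : Ω)) • ln = ((s : Ω) * (w₁ s * (a : Ω))) • lm := by
    intro s a b
    have ha : (a : Ω) • lm = lm := a.2.2
    have hb : (b : Ω) • ln = ln := b.2.2
    calc (w₂ s * (b : Ω)) • ln = w₂ s • ((b : Ω) • ln) := mul_smul _ _ _
      _ = w₂ s • ln := by rw [hb]
      _ = ((s : Ω) * w₁ s) • lm := hweq s
      _ = ((s : Ω) * w₁ s) • ((a : Ω) • lm) := by rw [ha]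
      _ = ((s : Ω) * (w₁ s * (a : Ω))) • lm := by rw [smul_smul, mul_assoc]
  have hex : ∀ (s : galoisConnectingSet G M lm ln)
      (a : ↥(G ⊓ MulAction.stabilizer Ω lm)) (b : ↥(G ⊓ MulAction.stabilizer Ω ln)),
      ∃ φ, φ ∈ M ∧ (w₂ s * (b : Ω)) • ln = (φ * (w₁ s * (a : Ω))) • lm :=
    fun s a b => ⟨(s : Ω), s.2.1, key s a b⟩
  -- the injection
  set F : galoisConnectingSet G M lm ln × ↥(G ⊓ MulAction.stabilizer Ω lm) ×
      ↥(G ⊓ MulAction.stabilizer Ω ln) → ↥G × ↥G × ↥(M ⊓ MulAction.stabilizer Ω lm) :=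
    fun p =>
      (⟨w₁ p.1 * (p.2.1 : Ω), mul_mem (hw₁ p.1) p.2.1.2.1⟩,
       ⟨w₂ p.1 * (p.2.2 : Ω), mul_mem (hw₂ p.1) p.2.2.2.1⟩,
       ⟨(w₁ p.1 * (p.2.1 : Ω))⁻¹ *
          ((gcsRef M lm ln (w₁ p.1 * (p.2.1 : Ω)) (w₂ p.1 * (p.2.2 : Ω)))⁻¹ * (p.1 : Ω)) *
          (w₁ p.1 * (p.2.1 : Ω)), by
        obtain ⟨s, a, b⟩ := p
        set h₁ : Ω := w₁ s * (a : Ω) with hh₁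
        set h₂ : Ω := w₂ s * (b : Ω) with hh₂
        obtain ⟨hrM, hrEq⟩ := gcsRef_spec M lm ln (hex s a b)
        set φ₀ : Ω := gcsRef M lm ln h₁ h₂ with hφ₀
        constructor
        · exact hconj h₁ (mul_mem (hw₁ s) a.2.1) _ (mul_mem (inv_mem hrM) s.2.1)
        · have E : (s : Ω) • (h₁ • lm) = φ₀ • (h₁ • lm) := by
            rw [← mul_smul, ← mul_smul, ← key s a b, hrEq]
          show (h₁⁻¹ * (φ₀⁻¹ * (s : Ω)) * h₁) • lm = lm
          simp only [mul_smul, E, inv_smul_smul]⟩) with hF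
  have hinj : Function.Injective F := by
    rintro ⟨s, a, b⟩ ⟨s', a', b'⟩ h
    simp only [hF, Prod.mk.injEq, Subtype.mk.injEq] at h
    obtain ⟨e₁, e₂, e₃⟩ := h
    rw [e₁, e₂] at e₃
    have hs : (s : Ω) = (s' : Ω) := by
      have := mul_right_cancel e₃
      have := mul_left_cancel this
      exact mul_left_cancel this
    have hs' : s = s' := Subtype.ext hs
    subst hs'
    have ha : a = a' := Subtype.ext (mul_left_cancel e₁)
    have hb : b = b' := Subtype.ext (mul_left_cancel e₂)
    rw [ha, hb]
  have hfin : Finite (↥G × ↥G × ↥(M ⊓ MulAction.stabilizer Ω lm)) := by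
    exact Finite.instProd
  have hcard := Nat.card_le_card_of_injective F hinj
  simp only [Nat.card_prod] at hcard
  calc Nat.card (galoisConnectingSet G M lm ln) *
        Nat.card ↥(G ⊓ MulAction.stabilizer Ω lm) *
        Nat.card ↥(G ⊓ MulAction.stabilizer Ω ln)
      = Nat.card (galoisConnectingSet G M lm ln) *
        (Nat.card ↥(G ⊓ MulAction.stabilizer Ω lm) *
         Nat.card ↥(G ⊓ MulAction.stabilizer Ω ln)) := by ring
    _ ≤ Nat.card ↥G * (Nat.card ↥G * Nat.card ↥(M ⊓ MulAction.stabilizer Ω lm)) := hcard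
    _ = Nat.card G ^ 2 * Nat.card ↥(M ⊓ MulAction.stabilizer Ω lm) := by ring
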